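/- In Ãₙ, the subgroup N = ⟨pⱼ⁻¹pᵢ : 1 ≤ i,j ≤ n+1⟩ is a normal subgroup: for every generator a_k and every pⱼ⁻¹pᵢ there exist indices m, l with a_k(pⱼ⁻¹pᵢ) = (p_m⁻¹p_l)a_k. -/

import Mathlib

open CoxeterMatrix

/-- The affine Coxeter matrix of type Ãₙ on the cyclic index set `ZMod (n+1)`:
`aᵢ² = 1`, `(aᵢa_{i+1})³ = 1`, and non-adjacent generators (mod n+1) commute. -/
def affineA (n : ℕ) : CoxeterMatrix (ZMod (n + 1)) where
  M := fun i j => if i = j then 1 else if i = j + 1 ∨ j = i + 1 then 3 else 2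
  isSymm := by
    ext i j
    by_cases h : i = j
    · simp [Matrix.transpose_apply, Matrix.transpose, Matrix.of_apply, h]
    · simp only [Matrix.transpose, Matrix.of_apply]
      rw [if_neg h, if_neg (Ne.symm h)]
      exact if_congr or_comm rfl rfl
  diagonal := fun i => by simp
  off_diagonal := fun i j h => by
    simp only [if_neg h]
    split <;> simp

/-- The Coxeter generators `aᵢ` of `Ãₙ`. -/
def aa (n : ℕ) (i : ZMod (n + 1)) : (affineA n).Group := (affineA n).simple i

/-- The cyclic products `pⱼ = a_{j+1} a_{j+2} ⋯ a_{j-1}` (indices mod `n+1`). -/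
def pp (n : ℕ) (j : ZMod (n + 1)) : (affineA n).Group :=
  ((List.range n).map fun k => aa n (j + 1 + (k : ℕ))).prod

/-- `gⱼ = pⱼ⁻¹ p_{j+1}`. -/
def gg (n : ℕ) (j : ZMod (n + 1)) : (affineA n).Group := (pp n j)⁻¹ * pp n (j + 1)

/-- The subgroup `N = ⟨pⱼ⁻¹pᵢ : i, j⟩` of `Ãₙ`. -/
def NN (n : ℕ) : Subgroup (affineA n).Group :=
  Subgroup.closure {x | ∃ i j : ZMod (n + 1), x = (pp n j)⁻¹ * pp n i}

/-- The standard parabolic subgroup `⟨a₁,…,aₙ⟩` of `Ãₙ` (all generators except `a_{n+1} = a₀`). -/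
def parab (n : ℕ) : Subgroup (affineA n).Group :=
  Subgroup.closure {x | ∃ i : ZMod (n + 1), i ≠ 0 ∧ x = aa n i}

section Aux

variable {n : ℕ}

/-- cast injectivity helper -/
lemma cast_ne_cast {a b : ℕ} (ha : a < n + 1) (hb : b < n + 1) (h : a ≠ b) :
    ((a : ZMod (n + 1)) : ZMod (n + 1)) ≠ (b : ZMod (n + 1)) := by
  intro hab
  apply h
  have := congrArg ZMod.val hab
  rwa [ZMod.val_cast_of_lt ha, ZMod.val_cast_of_lt hb] at this

lemma aa_sq (i : ZMod (n + 1)) : aa n i * aa n i = 1 :=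
  (affineA n).toCoxeterSystem.simple_mul_simple_self i

lemma aa_inv (i : ZMod (n + 1)) : (aa n i)⁻¹ = aa n i :=
  (affineA n).toCoxeterSystem.inv_simple i

lemma affineA_apply_braid (hn : 2 ≤ n) (i : ZMod (n + 1)) : affineA n (i + 1) i = 3 := by
  have h1 : (1 : ZMod (n + 1)) ≠ 0 := by
    have := cast_ne_cast (n := n) (a := 1) (b := 0) (by omega) (by omega) (by omega)
    simpa using this
  have : i + 1 ≠ i := by
    intro h
    exact h1 (by linear_combination h - i)
  show (if i + 1 = i then 1 else if i + 1 = i + 1 ∨ i = i + 1 + 1 then 3 else 2) = 3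
  rw [if_neg this, if_pos (Or.inl rfl)]

lemma aa_braid (hn : 2 ≤ n) (i : ZMod (n + 1)) :
    aa n (i + 1) * aa n i * aa n (i + 1) = aa n i * aa n (i + 1) * aa n i := by
  have h := (affineA n).toCoxeterSystem.simple_mul_simple_pow (i + 1) i
  rw [affineA_apply_braid hn i] at h
  have h' : aa n (i+1) * aa n i * (aa n (i+1) * aa n i) * (aa n (i+1) * aa n i) = 1 := by
    have := h
    rw [pow_succ, pow_succ, pow_one] at this
    exact this
  have : aa n (i+1) * aa n i * aa n (i+1) = (aa n i * aa n (i+1) * aa n i)⁻¹ := by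
    rw [eq_inv_iff_mul_eq_one]
    calc aa n (i+1) * aa n i * aa n (i+1) * (aa n i * aa n (i+1) * aa n i)
        = aa n (i+1) * aa n i * (aa n (i+1) * aa n i) * (aa n (i+1) * aa n i) := by group
      _ = 1 := h'
  rw [this]
  simp [mul_inv_rev, aa_inv, mul_assoc]

lemma aa_comm (h1 : i ≠ m) (h2 : i ≠ m + 1) (h3 : m ≠ i + 1) :
    Commute (aa n i) (aa n m) := by
  have hM : affineA n i m = 2 := by
    show (if i = m then 1 else if i = m + 1 ∨ m = i + 1 then 3 else 2) = 2
    rw [if_neg h1, if_neg (by tauto)]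
  have h := (affineA n).toCoxeterSystem.simple_mul_simple_pow i m
  rw [hM, pow_two] at h
  have : aa n i * aa n m = (aa n i * aa n m)⁻¹ := by
    rw [eq_inv_iff_mul_eq_one]; exact h
  unfold Commute SemiconjBy
  rw [this, mul_inv_rev, aa_inv, aa_inv]

end Aux

section Rel

variable {n : ℕ}

lemma pp_eq (j : ZMod (n + 1)) :
    pp n j = ((List.range n).map fun k => aa n (j + 1 + (k : ℕ))).prod := rfl

lemma cast_n_eq_neg_one : ((n : ℕ) : ZMod (n + 1)) = -1 := by
  have := ZMod.natCast_self (n + 1)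
  push_cast at this
  linear_combination this

/-- Peeling the first factor: `p_j = a_{j+1} * (a_{j+2} ⋯ a_{j-1})`. -/
lemma pp_peel_left (hn : 1 ≤ n) (j : ZMod (n + 1)) :
    pp n j = aa n (j + 1) *
      ((List.range (n - 1)).map fun k => aa n (j + 1 + 1 + (k : ℕ))).prod := by
  obtain ⟨m, rfl⟩ : ∃ m, n = m + 1 := ⟨n - 1, by omega⟩
  rw [pp_eq]
  rw [show List.range (m + 1) = 0 :: List.map Nat.succ (List.range m) from
    List.range_succ_eq_map]
  simp only [List.map_cons, List.prod_cons, List.map_map, Nat.cast_zero, add_zero,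
    Nat.add_sub_cancel]
  congr 2
  apply List.map_congr_left
  intro k _
  simp only [Function.comp_apply, Nat.succ_eq_add_one]
  congr 1
  push_cast
  ring

/-- Peeling the last factor: `p_j = (a_{j+1} ⋯ a_{j-2}) * a_{j-1}`. -/
lemma pp_peel_right (hn : 1 ≤ n) (j : ZMod (n + 1)) :
    pp n j = ((List.range (n - 1)).map fun k => aa n (j + 1 + (k : ℕ))).prod * aa n (j - 1) := by
  obtain ⟨m, rfl⟩ : ∃ m, n = m + 1 := ⟨n - 1, by omega⟩
  rw [pp_eq]
  rw [show List.range (m + 1) = List.range m ++ [m] from List.range_succ]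
  simp only [List.map_append, List.map_cons, List.map_nil, List.prod_append, List.prod_cons,
    List.prod_nil, mul_one, Nat.add_sub_cancel]
  congr 1
  congr 1
  have : ((m : ℕ) : ZMod (m + 1 + 1)) = -1 - 1 := by
    have h := ZMod.natCast_self (m + 2)
    push_cast at h
    linear_combination h
  rw [this]; ring

/-- Lemma A : `a_j p_j = p_{j-1} a_{j-1}`. -/
lemma relA (hn : 1 ≤ n) (j : ZMod (n + 1)) :
    aa n j * pp n j = pp n (j - 1) * aa n (j - 1) := by
  rw [pp_peel_right hn j, pp_peel_left hn (j - 1)]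
  have e : j - 1 + 1 + 1 = j + 1 := by ring
  have e2 : j - 1 + 1 = j := by ring
  rw [e, e2, mul_assoc]

/-- Lemma B : `a_{j+1} p_j = p_{j+1} a_j`. -/
lemma relB (hn : 1 ≤ n) (j : ZMod (n + 1)) :
    aa n (j + 1) * pp n j = pp n (j + 1) * aa n j := by
  rw [pp_peel_left hn j, pp_peel_right hn (j + 1)]
  have e2 : j + 1 - 1 = j := by ring
  rw [e2, ← mul_assoc, aa_sq, one_mul, mul_assoc, aa_sq, mul_one]

end Rel

section RelC

variable {n : ℕ}

/-- Lemma C : the generic case `a_i p_j = p_j a_{i-1}` for `i ≠ j, j+1`. -/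
lemma relC (hn : 2 ≤ n) {i j : ZMod (n + 1)} (hij : i ≠ j) (hij1 : i ≠ j + 1) :
    aa n i * pp n j = pp n j * aa n (i - 1) := by
  set t : ℕ := (i - (j + 1)).val with ht
  have htlt : t < n + 1 := ZMod.val_lt _
  have hti : i = j + 1 + ((t : ℕ) : ZMod (n + 1)) := by
    rw [ht, ZMod.natCast_val, ZMod.cast_id]; ring
  have ht0 : t ≠ 0 := by
    intro h
    apply hij1
    rw [hti, h]
    push_cast
    ring
  have htn : t ≠ n := by
    intro h
    apply hij
    rw [hti, h, cast_n_eq_neg_one]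
    ring
  have h1 : 1 ≤ t := by omega
  have h2 : t + 1 ≤ n := by omega
  -- index list decomposition
  have hd1 : List.range n
      = List.range (t + 1) ++ List.map (fun x => t + 1 + x) (List.range (n - (t + 1))) := by
    rw [← List.range_add]
    congr 1
    omega
  have hd2 : List.range (t + 1) = List.range (t - 1) ++ [t - 1, t] := by
    rw [show t + 1 = (t - 1 + 1) + 1 by omega, List.range_succ, List.range_succ,
      show t - 1 + 1 = t by omega]
    simp
  -- the distinguished middle factors
  have fA : aa n (j + 1 + ((t - 1 : ℕ) : ZMod (n + 1))) = aa n (i - 1) := by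
    congr 1
    rw [Nat.cast_sub h1, Nat.cast_one, hti]
    ring
  have fB : aa n (j + 1 + ((t : ℕ) : ZMod (n + 1))) = aa n i := by rw [← hti]
  -- braid relation between a_{i-1} and a_i
  have hbr : aa n i * aa n (i - 1) * aa n i = aa n (i - 1) * aa n i * aa n (i - 1) := by
    have := aa_braid hn (i - 1)
    rwa [show i - 1 + 1 = i by ring] at this
  -- the decomposition of p_j
  have hX : pp n j =
      ((List.range (t - 1)).map fun k => aa n (j + 1 + (k : ℕ))).prod *
        (aa n (i - 1) * (aa n i *
          ((List.range (n - (t + 1))).map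
            fun k => aa n (j + 1 + ((t + 1 + k : ℕ) : ZMod (n + 1)))).prod)) := by
    rw [pp_eq, hd1, hd2]
    simp only [List.map_append, List.prod_append, List.map_cons, List.map_nil,
      List.prod_cons, List.prod_nil, mul_one, List.map_map]
    rw [fA, fB]
    have hcomp : List.map ((fun k => aa n (j + 1 + (k : ℕ))) ∘ fun x => t + 1 + x)
        (List.range (n - (t + 1)))
        = List.map (fun k => aa n (j + 1 + ((t + 1 + k : ℕ) : ZMod (n + 1))))
          (List.range (n - (t + 1))) := rfl
    rw [hcomp]
    group
  -- commutation of a_i with the prefix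
  have hc1 : Commute (aa n i)
      ((List.range (t - 1)).map fun k => aa n (j + 1 + (k : ℕ))).prod := by
    apply Commute.list_prod_right
    intro x hx
    simp only [List.mem_map, List.mem_range] at hx
    obtain ⟨k, hk, rfl⟩ := hx
    apply aa_comm
    · rw [hti]
      intro h
      refine cast_ne_cast (n := n) (a := t) (b := k) htlt (by omega) (by omega) ?_
      push_cast at h ⊢
      linear_combination h
    · rw [hti]
      intro h
      refine cast_ne_cast (n := n) (a := t) (b := k + 1) htlt (by omega) (by omega) ?_
      push_cast at h ⊢
      linear_combination h
    · rw [hti]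
      intro h
      refine cast_ne_cast (n := n) (a := k) (b := t + 1) (by omega) (by omega) (by omega) ?_
      push_cast at h ⊢
      linear_combination h
  -- commutation of a_{i-1} with the suffix
  have hc2 : Commute (aa n (i - 1))
      ((List.range (n - (t + 1))).map
        fun k => aa n (j + 1 + ((t + 1 + k : ℕ) : ZMod (n + 1)))).prod := by
    apply Commute.list_prod_right
    intro x hx
    simp only [List.mem_map, List.mem_range] at hx
    obtain ⟨k, hk, rfl⟩ := hx
    apply aa_comm
    · rw [hti]
      intro h
      refine cast_ne_cast (n := n) (a := t) (b := t + 2 + k) htlt (by omega) (by omega) ?_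
      push_cast at h ⊢
      linear_combination h
    · rw [hti]
      intro h
      rcases Nat.lt_or_ge (t + 3 + k) (n + 1) with hc | hc
      · refine cast_ne_cast (n := n) (a := t) (b := t + 3 + k) htlt hc (by omega) ?_
        push_cast at h ⊢
        linear_combination h
      · have he : t + 3 + k = n + 1 := by omega
        refine cast_ne_cast (n := n) (a := t) (b := 0) htlt (by omega) (by omega) ?_
        have h0 : ((t + 3 + k : ℕ) : ZMod (n + 1)) = 0 := by
          rw [he]
          exact_mod_cast ZMod.natCast_self (n + 1)
        push_cast at h0 h ⊢
        linear_combination h0 + h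
    · rw [hti]
      intro h
      refine cast_ne_cast (n := n) (a := t + 1 + k) (b := t) (by omega) htlt (by omega) ?_
      push_cast at h ⊢
      linear_combination h
  -- assemble
  rw [hX]
  set P1 := ((List.range (t - 1)).map fun k => aa n (j + 1 + (k : ℕ))).prod
  set P2 := ((List.range (n - (t + 1))).map
    fun k => aa n (j + 1 + ((t + 1 + k : ℕ) : ZMod (n + 1)))).prod
  calc aa n i * (P1 * (aa n (i - 1) * (aa n i * P2)))
      = (aa n i * P1) * (aa n (i - 1) * (aa n i * P2)) := by group
    _ = (P1 * aa n i) * (aa n (i - 1) * (aa n i * P2)) := by rw [hc1.eq]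
    _ = P1 * ((aa n i * aa n (i - 1) * aa n i) * P2) := by group
    _ = P1 * ((aa n (i - 1) * aa n i * aa n (i - 1)) * P2) := by rw [hbr]
    _ = P1 * (aa n (i - 1) * aa n i * (aa n (i - 1) * P2)) := by group
    _ = P1 * (aa n (i - 1) * aa n i * (P2 * aa n (i - 1))) := by rw [hc2.eq]
    _ = (P1 * (aa n (i - 1) * (aa n i * P2))) * aa n (i - 1) := by group

/-- Combined relation `a_i p_j = p_{j'} a_{i-1}`. -/
lemma relD (hn : 2 ≤ n) (i j : ZMod (n + 1)) :
    ∃ j', aa n i * pp n j = pp n j' * aa n (i - 1) := by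
  by_cases hA : i = j
  · exact ⟨j - 1, by rw [hA]; exact relA (by omega) j⟩
  by_cases hB : i = j + 1
  · refine ⟨j + 1, ?_⟩
    rw [hB, show j + 1 - 1 = j by ring]
    exact relB (by omega) j
  exact ⟨j, relC hn hA hB⟩

/-- Surjective form: for any target `j'`, a source `j` with `a_i p_j = p_{j'} a_{i-1}`. -/
lemma relD' (hn : 2 ≤ n) (i j' : ZMod (n + 1)) :
    ∃ j, aa n i * pp n j = pp n j' * aa n (i - 1) := by
  by_cases h1 : j' = i - 1
  · exact ⟨i, by rw [h1]; exact relA (by omega) i⟩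
  by_cases h2 : j' = i
  · refine ⟨i - 1, ?_⟩
    have hb := relB (n := n) (by omega) (i - 1)
    rw [show i - 1 + 1 = i by ring] at hb
    rw [h2]
    exact hb
  refine ⟨j', relC hn (Ne.symm h2) ?_⟩
  intro h
  exact h1 (by rw [h]; ring)

/-- The inverse relation `a_i p_{j'}⁻¹ = p_j⁻¹ a_{i+1}`. -/
lemma relE (hn : 2 ≤ n) (i j' : ZMod (n + 1)) :
    ∃ j, aa n i * (pp n j')⁻¹ = (pp n j)⁻¹ * aa n (i + 1) := by
  obtain ⟨j, hj⟩ := relD' hn (i + 1) j'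
  rw [show i + 1 - 1 = i by ring] at hj
  refine ⟨j, ?_⟩
  have h := congrArg (·⁻¹) hj
  simp only [mul_inv_rev, aa_inv] at h
  exact h.symm

end RelC

/-- In `Ãₙ`, the subgroup `N = ⟨pⱼ⁻¹pᵢ⟩` is normal: for every generator `a_k` and every
`pⱼ⁻¹pᵢ` there exist indices `m, l` with `a_k (pⱼ⁻¹pᵢ) = (p_m⁻¹p_l) a_k`. -/
theorem stmt9 (n : ℕ) (hn : 2 ≤ n) :
    (∀ k i j : ZMod (n + 1), ∃ m l : ZMod (n + 1),
      aa n k * ((pp n j)⁻¹ * pp n i) = ((pp n m)⁻¹ * pp n l) * aa n k) ∧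
    (NN n).Normal := by
  have main : ∀ k i j : ZMod (n + 1), ∃ m l : ZMod (n + 1),
      aa n k * ((pp n j)⁻¹ * pp n i) = ((pp n m)⁻¹ * pp n l) * aa n k := by
    intro k i j
    obtain ⟨m, hm⟩ := relE hn k j
    obtain ⟨l, hl⟩ := relD hn (k + 1) i
    rw [show k + 1 - 1 = k by ring] at hl
    refine ⟨m, l, ?_⟩
    calc aa n k * ((pp n j)⁻¹ * pp n i)
        = (aa n k * (pp n j)⁻¹) * pp n i := by group
      _ = ((pp n m)⁻¹ * aa n (k + 1)) * pp n i := by rw [hm]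
      _ = (pp n m)⁻¹ * (aa n (k + 1) * pp n i) := by group
      _ = (pp n m)⁻¹ * (pp n l * aa n k) := by rw [hl]
      _ = ((pp n m)⁻¹ * pp n l) * aa n k := by group
  refine ⟨main, ?_⟩
  have hsimp : ∀ (k : ZMod (n + 1)) (y : (affineA n).Group), y ∈ NN n →
      aa n k * y * (aa n k)⁻¹ ∈ NN n := by
    intro k y hy
    refine Subgroup.closure_induction
      (p := fun y _ => aa n k * y * (aa n k)⁻¹ ∈ NN n) ?_ ?_ ?_ ?_ hy
    · rintro x ⟨i, j, rfl⟩
      obtain ⟨m, l, hml⟩ := main k i j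
      have : aa n k * ((pp n j)⁻¹ * pp n i) * (aa n k)⁻¹ = (pp n m)⁻¹ * pp n l := by
        rw [hml]
        group
      rw [this]
      exact Subgroup.subset_closure ⟨l, m, rfl⟩
    · simpa using one_mem (NN n)
    · intro x y _ _ hx hy
      have : aa n k * (x * y) * (aa n k)⁻¹
          = (aa n k * x * (aa n k)⁻¹) * (aa n k * y * (aa n k)⁻¹) := by group
      rw [this]
      exact mul_mem hx hy
    · intro x _ hx
      have : aa n k * x⁻¹ * (aa n k)⁻¹ = (aa n k * x * (aa n k)⁻¹)⁻¹ := by group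
      rw [this]
      exact inv_mem hx
  refine ⟨fun x hx g => ?_⟩
  induction g using CoxeterSystem.simple_induction_left
    (cs := (affineA n).toCoxeterSystem) with
  | one => simpa using hx
  | mul_simple_left w i hw =>
      have : ((affineA n).toCoxeterSystem.simple i * w) * x
            * ((affineA n).toCoxeterSystem.simple i * w)⁻¹
          = aa n i * (w * x * w⁻¹) * (aa n i)⁻¹ := by
        show (aa n i * w) * x * (aa n i * w)⁻¹ = _
        group
      rw [this]
      exact hsimp i _ hw
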